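/- (Corollary to Theorem 2) Let K, M be origin-symmetric convex bodies in ℝⁿ, p > 0, and f a non-negative continuous function on ℝⁿ. If ∫_K |⟨x,ξ⟩|^p dx ≤ ∫_M |⟨x,ξ⟩|^p f(x) dx for all ξ ∈ S^{n−1}, then |K|^{(n+p)/n} ≤ ((n+p)/n) · d_ovr(M, L_p^n)^p · |M|^{p/n} · ∫_M f. -/

import Mathlib

open MeasureTheory Set Metric Topology
open scoped ENNReal RealInnerProductSpace NNReal Pointwise

noncomputable section

abbrev E (n : ℕ) := EuclideanSpace ℝ (Fin n)

/-- A star body: compact, origin in the interior, star-shaped with respect to the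
origin, and with continuous Minkowski functional (gauge). -/
def IsStarBody {n : ℕ} (K : Set (E n)) : Prop :=
  IsCompact K ∧ 0 ∈ interior K ∧
    (∀ x ∈ K, ∀ t : ℝ, 0 ≤ t → t ≤ 1 → t • x ∈ K) ∧ Continuous (gauge K)

/-- An origin-symmetric convex body. -/
def IsSymmetricConvexBody {n : ℕ} (K : Set (E n)) : Prop :=
  IsCompact K ∧ Convex ℝ K ∧ 0 ∈ interior K ∧ ∀ x ∈ K, -x ∈ K


/-- D is the unit ball of an n-dimensional subspace of L_p: its gauge to the p-th power
is given by integration of |<x,th>|^p against a finite Borel measure on the sphere. -/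
def IsLpBall (n : ℕ) (p : ℝ) (D : Set (E n)) : Prop :=
  IsSymmetricConvexBody D ∧
    ∃ ν : Measure (sphere (0 : E n) 1), IsFiniteMeasure ν ∧
      ∀ x : E n, gauge D x ^ p = ∫ θ : sphere (0 : E n) 1, |⟪x, (θ : E n)⟫| ^ p ∂ν

/-- Outer volume ratio distance from M to the class of unit balls of subspaces of L_p. -/
def dovrLp (n : ℕ) (p : ℝ) (M : Set (E n)) : ℝ :=
  sInf {r | ∃ D : Set (E n), M ⊆ D ∧ IsLpBall n p D ∧
    r = ((volume D).toReal / (volume M).toReal) ^ ((1 : ℝ) / n)}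

namespace MomentAux

variable {n : ℕ}

lemma contAbsRpow {p : ℝ} (hp : 0 < p) : Continuous fun t : ℝ => |t| ^ p :=
  (Real.continuous_rpow_const hp.le).comp continuous_abs

lemma scb_nhds {D : Set (E n)} (hD : IsSymmetricConvexBody D) : D ∈ 𝓝 (0 : E n) :=
  mem_interior_iff_mem_nhds.1 hD.2.2.1

lemma scb_vol_pos {D : Set (E n)} (hD : IsSymmetricConvexBody D) : 0 < volume D :=
  Measure.measure_pos_of_nonempty_interior _ ⟨0, hD.2.2.1⟩

lemma scb_vol_lt_top {D : Set (E n)} (hD : IsSymmetricConvexBody D) : volume D < ∞ :=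
  hD.1.measure_lt_top

lemma scb_gauge_cont {D : Set (E n)} (hD : IsSymmetricConvexBody D) : Continuous (gauge D) :=
  continuous_gauge hD.2.1 (scb_nhds hD)

lemma mem_smul_of_gauge_lt {D : Set (E n)} (hD : IsSymmetricConvexBody D) {t : ℝ} (ht : 0 < t)
    {x : E n} (hx : gauge D x < t) : x ∈ t • D := by
  have h0D : (0 : E n) ∈ D := interior_subset hD.2.2.1
  have habs : Absorbent ℝ D := absorbent_nhds_zero (scb_nhds hD)
  have h1 : gauge D (t⁻¹ • x) < 1 := by
    rw [gauge_smul_of_nonneg (inv_nonneg.2 ht.le)]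
    rw [smul_eq_mul]
    calc t⁻¹ * gauge D x < t⁻¹ * t := by
          exact mul_lt_mul_of_pos_left hx (inv_pos.2 ht)
      _ = 1 := inv_mul_cancel₀ ht.ne'
  have : t⁻¹ • x ∈ D := gauge_lt_one_subset_self hD.2.1 h0D habs h1
  refine ⟨t⁻¹ • x, this, ?_⟩
  show t • t⁻¹ • x = x
  rw [smul_smul, mul_inv_cancel₀ ht.ne', one_smul]

lemma stepB (hn : 0 < n) {p : ℝ} (hp : 0 < p) {K D : Set (E n)}
    (hK : IsSymmetricConvexBody K) (hD : IsSymmetricConvexBody D) :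
    ENNReal.ofReal (((n : ℝ) / (n + p)) * (volume K).toReal ^ (((n : ℝ) + p) / n) *
        (volume D).toReal ^ (-(p / (n : ℝ)))) ≤
      ∫⁻ x in K, ENNReal.ofReal (gauge D x ^ p) := by
  have hn' : (0 : ℝ) < n := by exact_mod_cast hn
  set g := gauge D with hg
  set vK := (volume K).toReal with hvKdef
  set vD := (volume D).toReal with hvDdef
  have hvK : 0 < vK := ENNReal.toReal_pos (scb_vol_pos hK).ne' (scb_vol_lt_top hK).ne
  have hvD : 0 < vD := ENNReal.toReal_pos (scb_vol_pos hD).ne' (scb_vol_lt_top hD).ne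
  set t0 : ℝ := (vK / vD) ^ ((1 : ℝ) / n) with ht0def
  have ht0 : 0 < t0 := Real.rpow_pos_of_pos (by positivity) _
  have hgcont : Continuous g := scb_gauge_cont hD
  have hpint : ∀ t > (0:ℝ), IntervalIntegrable (fun s : ℝ => p * s ^ (p - 1)) volume 0 t :=
    fun t _ => (intervalIntegral.intervalIntegrable_rpow' (by linarith)).const_mul p
  have hlayer := lintegral_comp_eq_lintegral_meas_le_mul (volume.restrict K)
      (Filter.Eventually.of_forall fun x => gauge_nonneg x)
      hgcont.measurable.aemeasurable hpint
      ((ae_restrict_iff' measurableSet_Ioi).2 (Filter.Eventually.of_forall fun t ht => by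
        have ht' : (0:ℝ) < t := ht
        positivity))
  have hprim : ∀ a : ℝ, 0 ≤ a → (∫ s in (0)..a, p * s ^ (p - 1)) = a ^ p := by
    intro a _
    rw [intervalIntegral.integral_const_mul, integral_rpow (Or.inl (by linarith))]
    have h1 : p - 1 + 1 = p := by ring
    rw [h1, Real.zero_rpow hp.ne']
    field_simp
    simp
  have hLHS : ∫⁻ x in K, ENNReal.ofReal (∫ s in (0)..(g x), p * s ^ (p - 1)) ∂volume
      = ∫⁻ x in K, ENNReal.ofReal (g x ^ p) ∂volume :=
    lintegral_congr fun x => by rw [hprim _ (gauge_nonneg _)]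
  -- pointwise lower bound for the tail measure
  have hmuK : ∀ t : ℝ, 0 < t → ENNReal.ofReal vK ≤
      (volume.restrict K) {a | t ≤ g a} + ENNReal.ofReal (t ^ (n:ℝ) * vD) := by
    intro t ht
    have hsub : K ⊆ ({a | t ≤ g a} ∩ K) ∪ t • D := by
      intro x hx
      rcases le_or_gt t (g x) with h | h
      · exact Or.inl ⟨h, hx⟩
      · exact Or.inr (mem_smul_of_gauge_lt hD ht h)
    have hrest : (volume.restrict K) {a | t ≤ g a} = volume ({a | t ≤ g a} ∩ K) := by
      rw [Measure.restrict_apply (measurableSet_le measurable_const hgcont.measurable)]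
    have hfr : Module.finrank ℝ (E n) = n := finrank_euclideanSpace_fin
    have hsmul : volume (t • D) = ENNReal.ofReal (t ^ (n:ℝ) * vD) := by
      calc volume (t • D) = ENNReal.ofReal (|t| ^ n) * volume D := by
            rw [Measure.addHaar_smul, hfr, abs_pow]
        _ = ENNReal.ofReal (t ^ (n:ℝ)) * ENNReal.ofReal vD := by
            rw [abs_of_pos ht, Real.rpow_natCast, ENNReal.ofReal_toReal (scb_vol_lt_top hD).ne]
        _ = ENNReal.ofReal (t ^ (n:ℝ) * vD) := (ENNReal.ofReal_mul (by positivity)).symm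
    calc ENNReal.ofReal vK = volume K := ENNReal.ofReal_toReal (scb_vol_lt_top hK).ne
      _ ≤ volume (({a | t ≤ g a} ∩ K) ∪ t • D) := measure_mono hsub
      _ ≤ volume ({a | t ≤ g a} ∩ K) + volume (t • D) := measure_union_le _ _
      _ = (volume.restrict K) {a | t ≤ g a} + ENNReal.ofReal (t ^ (n:ℝ) * vD) := by
          rw [hrest, hsmul]
  set φ : ℝ → ℝ := fun t => p * vK * t ^ (p - 1) - p * vD * t ^ ((n:ℝ) + p - 1) with hφdef
  have ht0n : t0 ^ (n:ℝ) = vK / vD := by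
    rw [ht0def, ← Real.rpow_mul (by positivity)]
    rw [one_div, inv_mul_cancel₀ hn'.ne', Real.rpow_one]
  have hφbound : ∀ t ∈ Ioc (0:ℝ) t0, ENNReal.ofReal (φ t) ≤
      (volume.restrict K) {a | t ≤ g a} * ENNReal.ofReal (p * t ^ (p - 1)) := by
    intro t ht
    have htpos : 0 < t := ht.1
    have htn : t ^ (n:ℝ) * vD ≤ vK := by
      have h1 : t ^ (n:ℝ) ≤ t0 ^ (n:ℝ) :=
        Real.rpow_le_rpow htpos.le ht.2 (by positivity)
      rw [ht0n] at h1
      calc t ^ (n:ℝ) * vD ≤ (vK / vD) * vD := by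
            exact mul_le_mul_of_nonneg_right h1 hvD.le
        _ = vK := by field_simp
    have hφt : φ t = (vK - t ^ (n:ℝ) * vD) * (p * t ^ (p - 1)) := by
      have hsplit : t ^ ((n:ℝ) + p - 1) = t ^ (n:ℝ) * t ^ (p - 1) := by
        rw [← Real.rpow_add htpos]
        ring_nf
      rw [hφdef]
      simp only []
      rw [hsplit]
      ring
    rw [hφt, ENNReal.ofReal_mul (by linarith)]
    refine mul_le_mul_left ?_ _
    rw [ENNReal.ofReal_sub _ (by positivity)]
    exact tsub_le_iff_right.2 (hmuK t htpos)
  -- integrability and value of the real integral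
  have hint1 : IntervalIntegrable (fun t : ℝ => p * vK * t ^ (p - 1)) volume 0 t0 :=
    (intervalIntegral.intervalIntegrable_rpow' (by linarith)).const_mul _
  have hint2 : IntervalIntegrable (fun t : ℝ => p * vD * t ^ ((n:ℝ) + p - 1)) volume 0 t0 :=
    (intervalIntegral.intervalIntegrable_rpow' (by linarith)).const_mul _
  have hintφ : IntervalIntegrable φ volume 0 t0 := hint1.sub hint2
  have hval : ∫ t in Ioc (0:ℝ) t0, φ t = vK * t0 ^ p - vD * (p / ((n:ℝ) + p)) * t0 ^ ((n:ℝ) + p) := by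
    rw [← intervalIntegral.integral_of_le ht0.le]
    rw [intervalIntegral.integral_sub hint1 hint2]
    rw [intervalIntegral.integral_const_mul, intervalIntegral.integral_const_mul,
      integral_rpow (Or.inl (by linarith)), integral_rpow (Or.inl (by linarith))]
    have e1 : p - 1 + 1 = p := by ring
    have e2 : (n:ℝ) + p - 1 + 1 = (n:ℝ) + p := by ring
    rw [e1, e2, Real.zero_rpow hp.ne', Real.zero_rpow (by positivity : (0:ℝ) < (n:ℝ) + p).ne']
    field_simp
    ring
  have hIoc : ENNReal.ofReal (∫ t in Ioc (0:ℝ) t0, φ t) = ∫⁻ t in Ioc (0:ℝ) t0, ENNReal.ofReal (φ t) := by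
    refine ofReal_integral_eq_lintegral_ofReal (hintφ.1) ?_
    refine (ae_restrict_iff' measurableSet_Ioc).2 (Filter.Eventually.of_forall fun t ht => ?_)
    have htpos : 0 < t := ht.1
    have htn : t ^ (n:ℝ) * vD ≤ vK := by
      have h1 : t ^ (n:ℝ) ≤ t0 ^ (n:ℝ) :=
        Real.rpow_le_rpow htpos.le ht.2 (by positivity)
      rw [ht0n] at h1
      calc t ^ (n:ℝ) * vD ≤ (vK / vD) * vD := mul_le_mul_of_nonneg_right h1 hvD.le
        _ = vK := by field_simp
    have hsplit : t ^ ((n:ℝ) + p - 1) = t ^ (n:ℝ) * t ^ (p - 1) := by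
      rw [← Real.rpow_add htpos]; ring_nf
    have : φ t = (vK - t ^ (n:ℝ) * vD) * (p * t ^ (p - 1)) := by
      rw [hφdef]; simp only []; rw [hsplit]; ring
    rw [this]
    have h0 : (0:ℝ) ≤ p * t ^ (p - 1) := by positivity
    exact mul_nonneg (by linarith) h0
  -- the real value dominates the target
  have hreal : ((n:ℝ) / (n + p)) * vK ^ (((n:ℝ) + p) / n) * vD ^ (-(p / (n:ℝ)))
      = vK * t0 ^ p - vD * (p / ((n:ℝ) + p)) * t0 ^ ((n:ℝ) + p) := by
    have e1 : t0 ^ p = vK ^ (p / (n:ℝ)) * vD ^ (-(p / (n:ℝ))) := by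
      rw [ht0def, ← Real.rpow_mul (by positivity), div_mul_eq_mul_div, one_mul,
        Real.div_rpow hvK.le hvD.le, Real.rpow_neg hvD.le, div_eq_mul_inv]
    have e2 : t0 ^ ((n:ℝ) + p) = vK ^ (((n:ℝ) + p) / n) * vD ^ (-(((n:ℝ) + p) / n)) := by
      rw [ht0def, ← Real.rpow_mul (by positivity), div_mul_eq_mul_div, one_mul,
        Real.div_rpow hvK.le hvD.le, Real.rpow_neg hvD.le, div_eq_mul_inv]
    have e3 : vK * vK ^ (p / (n:ℝ)) = vK ^ (((n:ℝ) + p) / n) := by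
      have : ((n:ℝ) + p) / n = 1 + p / n := by field_simp
      rw [this, Real.rpow_add hvK, Real.rpow_one]
    have e4 : vD * vD ^ (-(((n:ℝ) + p) / n)) = vD ^ (-(p / (n:ℝ))) := by
      have : -(p / (n:ℝ)) = 1 + -(((n:ℝ) + p) / n) := by field_simp; ring
      rw [this, Real.rpow_add hvD, Real.rpow_one]
    have h5 : (n:ℝ) / (n + p) + p / (n + p) = 1 := by
      field_simp
    rw [e1, e2]
    linear_combination (-(vD ^ (-(p / (n:ℝ))))) * e3
      + (p / ((n:ℝ) + p) * vK ^ (((n:ℝ) + p) / n)) * e4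
      + (vK ^ (((n:ℝ) + p) / n) * vD ^ (-(p / (n:ℝ)))) * h5
  -- chain everything
  calc ENNReal.ofReal (((n:ℝ) / (n + p)) * vK ^ (((n:ℝ) + p) / n) * vD ^ (-(p / (n:ℝ))))
      = ENNReal.ofReal (∫ t in Ioc (0:ℝ) t0, φ t) := by rw [hreal, hval]
    _ = ∫⁻ t in Ioc (0:ℝ) t0, ENNReal.ofReal (φ t) := hIoc
    _ ≤ ∫⁻ t in Ioc (0:ℝ) t0,
          (volume.restrict K) {a | t ≤ g a} * ENNReal.ofReal (p * t ^ (p - 1)) :=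
        setLIntegral_mono' measurableSet_Ioc hφbound
    _ ≤ ∫⁻ t in Ioi (0:ℝ),
          (volume.restrict K) {a | t ≤ g a} * ENNReal.ofReal (p * t ^ (p - 1)) :=
        lintegral_mono_set Ioc_subset_Ioi_self
    _ = ∫⁻ x in K, ENNReal.ofReal (∫ s in (0)..(g x), p * s ^ (p - 1)) ∂volume := hlayer.symm
    _ = ∫⁻ x in K, ENNReal.ofReal (g x ^ p) ∂volume := hLHS

lemma stepA {p : ℝ} (hp : 0 < p) {K M D : Set (E n)} {f : E n → ℝ}
    (hK : IsSymmetricConvexBody K) (hM : IsSymmetricConvexBody M) (hMD : M ⊆ D)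
    (hf : Continuous f) (hf0 : ∀ x, 0 ≤ f x)
    (ν : Measure (sphere (0 : E n) 1)) (hν : IsFiniteMeasure ν)
    (hgauge : ∀ x : E n, gauge D x ^ p = ∫ θ : sphere (0 : E n) 1, |⟪x, (θ : E n)⟫| ^ p ∂ν)
    (hcomp : ∀ ξ : E n, ‖ξ‖ = 1 →
      (∫ x in K, |⟪x, ξ⟫| ^ p) ≤ ∫ x in M, |⟪x, ξ⟫| ^ p * f x) :
    (∫⁻ x in K, ENNReal.ofReal (gauge D x ^ p)) ≤ ENNReal.ofReal (∫ x in M, f x) := by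
  haveI := hν
  have hip : ∀ ξ : E n, Continuous fun x : E n => |⟪x, ξ⟫| ^ p := fun ξ =>
    (contAbsRpow hp).comp (continuous_id.inner continuous_const)
  set F : E n → sphere (0 : E n) 1 → ℝ≥0∞ :=
    fun x θ => ENNReal.ofReal (|⟪x, (θ : E n)⟫| ^ p) with hF
  have hFcont : Continuous fun q : E n × sphere (0 : E n) 1 =>
      ENNReal.ofReal (|⟪q.1, (q.2 : E n)⟫| ^ p) :=
    ENNReal.continuous_ofReal.comp ((contAbsRpow hp).comp
      (continuous_fst.inner (continuous_subtype_val.comp continuous_snd)))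
  have key1 : ∀ x : E n, ENNReal.ofReal (gauge D x ^ p) = ∫⁻ θ, F x θ ∂ν := by
    intro x
    rw [hgauge x]
    refine ofReal_integral_eq_lintegral_ofReal ?_
      (Filter.Eventually.of_forall fun θ => by positivity)
    have hcont : Continuous fun θ : sphere (0 : E n) 1 => |⟪x, (θ : E n)⟫| ^ p :=
      (contAbsRpow hp).comp (continuous_const.inner continuous_subtype_val)
    exact hcont.integrable_of_hasCompactSupport
      (IsCompact.of_isClosed_subset isCompact_univ (isClosed_tsupport _) (subset_univ _))
  have hswapK : ∫⁻ x in K, (∫⁻ θ, F x θ ∂ν) ∂volume = ∫⁻ θ, (∫⁻ x in K, F x θ) ∂ν := by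
    exact lintegral_lintegral_swap (hFcont.measurable.aemeasurable)
  have hcompθ : ∀ θ : sphere (0 : E n) 1,
      (∫⁻ x in K, F x θ) ≤ ∫⁻ x in M, ENNReal.ofReal (|⟪x, (θ : E n)⟫| ^ p * f x) := by
    intro θ
    have hθ : ‖(θ : E n)‖ = 1 := by
      have := θ.2
      rwa [mem_sphere_zero_iff_norm] at this
    have hiK : IntegrableOn (fun x => |⟪x, (θ : E n)⟫| ^ p) K volume :=
      ((hip _).continuousOn).integrableOn_compact hK.1
    have hiM : IntegrableOn (fun x => |⟪x, (θ : E n)⟫| ^ p * f x) M volume :=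
      (((hip _).mul hf).continuousOn).integrableOn_compact hM.1
    rw [hF]
    rw [← ofReal_integral_eq_lintegral_ofReal hiK
      (Filter.Eventually.of_forall fun x => by positivity),
      ← ofReal_integral_eq_lintegral_ofReal hiM
      (Filter.Eventually.of_forall fun x => mul_nonneg (by positivity) (hf0 x))]
    exact ENNReal.ofReal_le_ofReal (hcomp _ hθ)
  have hswapM : ∫⁻ θ, (∫⁻ x in M, ENNReal.ofReal (|⟪x, (θ : E n)⟫| ^ p * f x)) ∂ν =
      ∫⁻ x in M, (∫⁻ θ, ENNReal.ofReal (|⟪x, (θ : E n)⟫| ^ p * f x) ∂ν) ∂volume := by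
    refine (lintegral_lintegral_swap ?_).symm
    have : Continuous fun q : E n × sphere (0 : E n) 1 =>
        ENNReal.ofReal (|⟪q.1, (q.2 : E n)⟫| ^ p * f q.1) :=
      ENNReal.continuous_ofReal.comp
        (((contAbsRpow hp).comp (continuous_fst.inner
          (continuous_subtype_val.comp continuous_snd))).mul (hf.comp continuous_fst))
    exact this.measurable.aemeasurable
  have hinner : ∀ x : E n, (∫⁻ θ, ENNReal.ofReal (|⟪x, (θ : E n)⟫| ^ p * f x) ∂ν) =
      ENNReal.ofReal (gauge D x ^ p) * ENNReal.ofReal (f x) := by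
    intro x
    have h1 : ∀ θ : sphere (0 : E n) 1,
        ENNReal.ofReal (|⟪x, (θ : E n)⟫| ^ p * f x) = F x θ * ENNReal.ofReal (f x) := by
      intro θ
      rw [hF, ENNReal.ofReal_mul (by positivity)]
    simp only [h1]
    have hmeas : Measurable (F x) := by
      rw [hF]
      exact (ENNReal.continuous_ofReal.comp ((contAbsRpow hp).comp
        (continuous_const.inner continuous_subtype_val))).measurable
    rw [lintegral_mul_const _ hmeas, ← key1 x]
  calc ∫⁻ x in K, ENNReal.ofReal (gauge D x ^ p) ∂volume
      = ∫⁻ x in K, (∫⁻ θ, F x θ ∂ν) ∂volume := by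
        exact lintegral_congr fun x => key1 x
    _ = ∫⁻ θ, (∫⁻ x in K, F x θ) ∂ν := hswapK
    _ ≤ ∫⁻ θ, (∫⁻ x in M, ENNReal.ofReal (|⟪x, (θ : E n)⟫| ^ p * f x)) ∂ν :=
        lintegral_mono fun θ => hcompθ θ
    _ = ∫⁻ x in M, (∫⁻ θ, ENNReal.ofReal (|⟪x, (θ : E n)⟫| ^ p * f x) ∂ν) ∂volume := hswapM
    _ = ∫⁻ x in M, ENNReal.ofReal (gauge D x ^ p) * ENNReal.ofReal (f x) ∂volume :=
        lintegral_congr fun x => hinner x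
    _ ≤ ∫⁻ x in M, ENNReal.ofReal (f x) ∂volume := by
        refine setLIntegral_mono' hM.1.measurableSet fun x hx => ?_
        have hg1 : gauge D x ≤ 1 := gauge_le_one_of_mem (hMD hx)
        have hgp : gauge D x ^ p ≤ 1 := Real.rpow_le_one (gauge_nonneg _) hg1 hp.le
        calc ENNReal.ofReal (gauge D x ^ p) * ENNReal.ofReal (f x)
            ≤ 1 * ENNReal.ofReal (f x) :=
              mul_le_mul_left (by simpa using ENNReal.ofReal_le_one.2 hgp) _
          _ = ENNReal.ofReal (f x) := one_mul _
    _ = ENNReal.ofReal (∫ x in M, f x) := by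
        rw [← ofReal_integral_eq_lintegral_ofReal
          ((hf.continuousOn).integrableOn_compact hM.1)
          (Filter.Eventually.of_forall fun x => hf0 x)]

lemma perD (hn : 0 < n) {p : ℝ} (hp : 0 < p) {K M D : Set (E n)} {f : E n → ℝ}
    (hK : IsSymmetricConvexBody K) (hM : IsSymmetricConvexBody M) (hMD : M ⊆ D)
    (hLp : IsLpBall n p D) (hf : Continuous f) (hf0 : ∀ x, 0 ≤ f x)
    (hcomp : ∀ ξ : E n, ‖ξ‖ = 1 →
      (∫ x in K, |⟪x, ξ⟫| ^ p) ≤ ∫ x in M, |⟪x, ξ⟫| ^ p * f x) :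
    (volume K).toReal ^ (((n : ℝ) + p) / n) ≤
      (((n : ℝ) + p) / n) * (volume D).toReal ^ (p / (n : ℝ)) * ∫ x in M, f x := by
  obtain ⟨hDscb, ν, hν, hgauge⟩ := hLp
  have hA := stepA hp hK hM hMD hf hf0 ν hν hgauge hcomp
  have hB := stepB hn hp hK hDscb
  have hfint : (0 : ℝ) ≤ ∫ x in M, f x := integral_nonneg fun x => hf0 x
  have h := (ENNReal.ofReal_le_ofReal_iff hfint).1 (hB.trans hA)
  have hDpos : (0 : ℝ) < (volume D).toReal :=
    ENNReal.toReal_pos (scb_vol_pos hDscb).ne' (scb_vol_lt_top hDscb).ne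
  set a := (volume K).toReal ^ (((n : ℝ) + p) / n) with ha
  set b := (volume D).toReal ^ (p / (n : ℝ)) with hb
  have hbpos : 0 < b := Real.rpow_pos_of_pos hDpos _
  have hneg : (volume D).toReal ^ (-(p / (n : ℝ))) = b⁻¹ := by
    rw [Real.rpow_neg hDpos.le]
  rw [hneg] at h
  have hnp : (0 : ℝ) < ((n : ℝ) + p) / n := by positivity
  have heq : a = (((n : ℝ) + p) / n) * b * (((n : ℝ) / (n + p)) * a * b⁻¹) := by
    field_simp
  rw [heq]
  calc (((n : ℝ) + p) / n) * b * (((n : ℝ) / (n + p)) * a * b⁻¹)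
      ≤ (((n : ℝ) + p) / n) * b * ∫ x in M, f x := by
        apply mul_le_mul_of_nonneg_left h (by positivity)
    _ = (((n : ℝ) + p) / n) * (volume D).toReal ^ (p / (n : ℝ)) * ∫ x in M, f x := rfl

lemma iso_inv {p : ℝ} (O : E n ≃ₗᵢ[ℝ] E n) (x : E n) :
    (∫ y in ball (0 : E n) 1, |⟪O x, y⟫| ^ p) = ∫ y in ball (0 : E n) 1, |⟪x, y⟫| ^ p := by
  have hmp : MeasurePreserving O volume volume := O.measurePreserving
  have hemb : MeasurableEmbedding O := O.toHomeomorph.measurableEmbedding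
  have hpre : (⇑O) ⁻¹' (ball (0 : E n) 1) = ball 0 1 := by
    ext z
    simp [mem_ball_zero_iff, O.norm_map]
  rw [← hmp.setIntegral_preimage_emb hemb (fun y => |⟪O x, y⟫| ^ p) (ball 0 1), hpre]
  simp only [LinearIsometryEquiv.inner_map_map]

lemma unit_int_eq {p : ℝ} {u e : E n} (hu : ‖u‖ = 1) (he : ‖e‖ = 1) :
    (∫ y in ball (0 : E n) 1, |⟪u, y⟫| ^ p) = ∫ y in ball (0 : E n) 1, |⟪e, y⟫| ^ p := by
  by_cases hque : u = -e
  · subst hque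
    simp only [inner_neg_left, abs_neg]
  · have hw : e + u ≠ 0 := by
      intro h
      exact hque (by rw [← neg_eq_of_add_eq_zero_right h])
    set w : E n := e + u with hwdef
    have hwn : ‖w‖ ≠ 0 := norm_ne_zero_iff.2 hw
    set O : E n ≃ₗᵢ[ℝ] E n := Submodule.reflection (ℝ ∙ w) with hOdef
    have hs : ⟪w, e⟫ = 1 + ⟪u, e⟫ := by
      rw [hwdef, inner_add_left, real_inner_self_eq_norm_mul_norm, he]
      ring
    have hns : ‖w‖ ^ 2 = 2 + 2 * ⟪u, e⟫ := by
      rw [hwdef, norm_add_sq_real, he, hu, real_inner_comm]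
      ring
    have hden : (2 : ℝ) + 2 * ⟪u, e⟫ ≠ 0 := by
      rw [← hns]
      positivity
    have hcoef : ⟪w, e⟫ / ((‖w‖ : ℝ) ^ 2) = 1 / 2 := by
      rw [hs, hns, div_eq_div_iff hden two_ne_zero]
      ring
    have hOe : O e = u := by
      rw [hOdef, Submodule.reflection_singleton_apply]
      simp only [RCLike.ofReal_real_eq_id, id_eq]
      rw [hcoef, two_nsmul, ← add_smul]
      norm_num
      rw [hwdef]
      abel
    rw [← hOe, iso_inv]

lemma int_ball_eq {p : ℝ} (hp : 0 < p) {e : E n} (he : ‖e‖ = 1) (x : E n) :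
    (∫ y in ball (0 : E n) 1, |⟪x, y⟫| ^ p)
      = ‖x‖ ^ p * ∫ y in ball (0 : E n) 1, |⟪e, y⟫| ^ p := by
  by_cases hx : x = 0
  · subst hx
    simp [Real.zero_rpow hp.ne']
  · have hu : ‖(‖x‖⁻¹ • x : E n)‖ = 1 := norm_smul_inv_norm hx
    have hpt : ∀ y : E n, |⟪x, y⟫| ^ p = ‖x‖ ^ p * |⟪(‖x‖⁻¹ • x : E n), y⟫| ^ p := by
      intro y
      rw [real_inner_smul_left, abs_mul, abs_of_nonneg (inv_nonneg.2 (norm_nonneg x)),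
        Real.mul_rpow (inv_nonneg.2 (norm_nonneg x)) (abs_nonneg _), ← mul_assoc,
        ← Real.mul_rpow (norm_nonneg x) (inv_nonneg.2 (norm_nonneg x)),
        mul_inv_cancel₀ (norm_ne_zero_iff.2 hx), Real.one_rpow, one_mul]
    simp only [hpt]
    rw [integral_const_mul, unit_int_eq hu he]

lemma int_ball_pos {p : ℝ} (hp : 0 < p) {e : E n} (he : ‖e‖ = 1) :
    0 < ∫ y in ball (0 : E n) 1, |⟪e, y⟫| ^ p := by
  have hcont : Continuous fun y : E n => |⟪e, y⟫| ^ p :=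
    (contAbsRpow hp).comp (continuous_const.inner continuous_id)
  have hint : IntegrableOn (fun y : E n => |⟪e, y⟫| ^ p) (ball (0 : E n) 1) volume :=
    (hcont.continuousOn.integrableOn_compact (isCompact_closedBall (0 : E n) 1)).mono_set
      ball_subset_closedBall
  rw [setIntegral_pos_iff_support_of_nonneg_ae
    (Filter.Eventually.of_forall fun y => by positivity) hint]
  set H : Submodule ℝ (E n) := LinearMap.ker (innerSL ℝ e).toLinearMap with hHdef
  have hHne : H ≠ ⊤ := by
    intro h
    have he2 : e ∈ H := h ▸ Submodule.mem_top
    rw [hHdef, LinearMap.mem_ker] at he2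
    have : ⟪e, e⟫ = (0 : ℝ) := he2
    rw [real_inner_self_eq_norm_mul_norm, he] at this
    norm_num at this
  have hH0 : volume (H : Set (E n)) = 0 := Measure.addHaar_submodule volume H hHne
  have hsub : ball (0 : E n) 1 \ (H : Set (E n)) ⊆
      Function.support (fun y : E n => |⟪e, y⟫| ^ p) ∩ ball (0 : E n) 1 := by
    rintro y ⟨hy1, hy2⟩
    refine ⟨?_, hy1⟩
    have hne : ⟪e, y⟫ ≠ 0 := by
      intro h
      exact hy2 (by rw [hHdef]; exact (LinearMap.mem_ker).2 h)
    have : 0 < |⟪e, y⟫| := abs_pos.2 hne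
    simp only [Function.mem_support]
    positivity
  calc (0 : ℝ≥0∞) < volume (ball (0 : E n) 1) := measure_ball_pos volume _ one_pos
    _ = volume (ball (0 : E n) 1 \ (H : Set (E n))) := (measure_diff_null hH0).symm
    _ ≤ volume (Function.support (fun y : E n => |⟪e, y⟫| ^ p) ∩ ball (0 : E n) 1) :=
        measure_mono hsub

lemma exists_LpBall_superset (hn : 0 < n) {p : ℝ} (hp : 0 < p) {M : Set (E n)}
    (hM : IsSymmetricConvexBody M) : ∃ D : Set (E n), M ⊆ D ∧ IsLpBall n p D := by
  classical
  obtain ⟨R, hR, hMR⟩ := hM.1.isBounded.subset_closedBall_lt 0 0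
  set D := closedBall (0 : E n) R with hDdef
  have hDscb : IsSymmetricConvexBody D := by
    refine ⟨isCompact_closedBall _ _, convex_closedBall _ _, ?_, ?_⟩
    · rw [hDdef, interior_closedBall _ hR.ne']
      exact mem_ball_self hR
    · intro x hx
      rw [hDdef, mem_closedBall_zero_iff] at hx ⊢
      simpa using hx
  set e : E n := EuclideanSpace.single (⟨0, hn⟩ : Fin n) (1 : ℝ) with hedef
  have he : ‖e‖ = 1 := by rw [hedef, EuclideanSpace.norm_single]; norm_num
  set c : ℝ := ∫ y in ball (0 : E n) 1, |⟪e, y⟫| ^ p with hcdef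
  have hc : 0 < c := int_ball_pos hp he
  set nmz : E n → E n := fun y => if y = 0 then e else ‖y‖⁻¹ • y with hnmzdef
  have hnmz_norm : ∀ y, ‖nmz y‖ = 1 := by
    intro y
    rw [hnmzdef]
    by_cases hy : y = 0
    · simp [hy, he]
    · simp only [if_neg hy]
      exact norm_smul_inv_norm hy
  have hnmz_meas : Measurable nmz := by
    apply measurable_of_continuousOn_compl_singleton (0 : E n)
    have hcont : ContinuousOn (fun y : E n => ‖y‖⁻¹ • y) ({(0 : E n)}ᶜ) := by
      refine ContinuousOn.fun_smul ?_ continuousOn_id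
      exact (continuous_norm.continuousOn).inv₀ fun y hy =>
        norm_ne_zero_iff.2 (by simpa using hy)
    refine hcont.congr fun y hy => ?_
    rw [hnmzdef]
    simp only [if_neg (show y ≠ 0 by simpa using hy)]
  set π : E n → sphere (0 : E n) 1 := fun y =>
    ⟨nmz y, by rw [mem_sphere_zero_iff_norm]; exact hnmz_norm y⟩ with hπdef
  have hπ : Measurable π := hnmz_meas.subtype_mk
  set w : E n → ℝ≥0∞ := fun y => ENNReal.ofReal (‖y‖ ^ p) with hwdef
  have hwmeas : Measurable w :=
    (ENNReal.continuous_ofReal.comp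
      ((Real.continuous_rpow_const hp.le).comp continuous_norm)).measurable
  set μw : Measure (E n) := (volume.restrict (ball (0 : E n) 1)).withDensity w with hμwdef
  set ν₀ : Measure (sphere (0 : E n) 1) := Measure.map π μw with hν₀def
  have hRpc : 0 < R ^ p * c := by positivity
  set a : ℝ≥0∞ := (ENNReal.ofReal (R ^ p * c))⁻¹ with hadef
  set ν : Measure (sphere (0 : E n) 1) := a • ν₀ with hνdef
  have hμw_univ : μw univ ≤ volume (ball (0 : E n) 1) := by
    rw [hμwdef, withDensity_apply _ MeasurableSet.univ, Measure.restrict_univ]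
    calc ∫⁻ y, w y ∂(volume.restrict (ball (0 : E n) 1))
        ≤ ∫⁻ _, 1 ∂(volume.restrict (ball (0 : E n) 1)) := by
          refine lintegral_mono_ae ((ae_restrict_iff' measurableSet_ball).2
            (Filter.Eventually.of_forall fun y hy => ?_))
          rw [hwdef]
          exact ENNReal.ofReal_le_one.2 (Real.rpow_le_one (norm_nonneg _)
            (le_of_lt (mem_ball_zero_iff.1 hy)) hp.le)
      _ = volume (ball (0 : E n) 1) := by rw [lintegral_one, Measure.restrict_apply_univ]
  have hν_fin : IsFiniteMeasure ν := by
    constructor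
    rw [hνdef]
    simp only [Measure.smul_apply, smul_eq_mul]
    have h1 : ν₀ univ ≤ volume (ball (0 : E n) 1) := by
      rw [hν₀def, Measure.map_apply hπ MeasurableSet.univ, preimage_univ]
      exact hμw_univ
    have h2 : a < ∞ := ENNReal.inv_lt_top.2 (ENNReal.ofReal_pos.2 hRpc)
    exact lt_of_le_of_lt (mul_le_mul_right h1 a)
      (ENNReal.mul_lt_top h2 measure_ball_lt_top)
  refine ⟨D, hMR, hDscb, ν, hν_fin, fun x => ?_⟩
  have hGcont : Continuous fun θ : sphere (0 : E n) 1 => |⟪x, (θ : E n)⟫| ^ p :=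
    (contAbsRpow hp).comp (continuous_const.inner continuous_subtype_val)
  have hGmeas : Measurable fun θ : sphere (0 : E n) 1 =>
      ENNReal.ofReal (|⟪x, (θ : E n)⟫| ^ p) :=
    (ENNReal.continuous_ofReal.comp hGcont).measurable
  have hint : IntegrableOn (fun y : E n => |⟪x, y⟫| ^ p) (ball (0 : E n) 1) volume :=
    (((contAbsRpow hp).comp
      (continuous_const.inner continuous_id)).continuousOn.integrableOn_compact
      (isCompact_closedBall (0 : E n) 1)).mono_set ball_subset_closedBall
  have hl0 : ∫⁻ θ, ENNReal.ofReal (|⟪x, (θ : E n)⟫| ^ p) ∂ν₀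
      = ENNReal.ofReal (c * ‖x‖ ^ p) := by
    have hgm : Measurable fun y : E n =>
        ENNReal.ofReal (|⟪x, ((π y : sphere (0 : E n) 1) : E n)⟫| ^ p) := hGmeas.comp hπ
    rw [hν₀def, lintegral_map hGmeas hπ, hμwdef,
      lintegral_withDensity_eq_lintegral_mul _ hwmeas hgm]
    have hpt : ∀ y : E n, (w * fun y => ENNReal.ofReal (|⟪x, ((π y : sphere (0:E n) 1) : E n)⟫| ^ p)) y
        = ENNReal.ofReal (|⟪x, y⟫| ^ p) := by
      intro y
      simp only [Pi.mul_apply]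
      by_cases hy : y = 0
      · subst hy
        rw [hwdef]
        simp [Real.zero_rpow hp.ne']
      · have hnmzy : nmz y = ‖y‖⁻¹ • y := by
          rw [hnmzdef]
          simp only [if_neg hy]
        show w y * ENNReal.ofReal (|⟪x, nmz y⟫| ^ p) = ENNReal.ofReal (|⟪x, y⟫| ^ p)
        rw [hnmzy, hwdef, ← ENNReal.ofReal_mul (by positivity)]
        congr 1
        rw [real_inner_smul_right, abs_mul, abs_of_nonneg (inv_nonneg.2 (norm_nonneg y)),
          Real.mul_rpow (inv_nonneg.2 (norm_nonneg y)) (abs_nonneg _), ← mul_assoc,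
          ← Real.mul_rpow (norm_nonneg y) (inv_nonneg.2 (norm_nonneg y)),
          mul_inv_cancel₀ (norm_ne_zero_iff.2 hy), Real.one_rpow, one_mul]
    calc ∫⁻ y, (w * fun y => ENNReal.ofReal (|⟪x, ((π y : sphere (0:E n) 1) : E n)⟫| ^ p)) y
          ∂(volume.restrict (ball (0 : E n) 1))
        = ∫⁻ y, ENNReal.ofReal (|⟪x, y⟫| ^ p) ∂(volume.restrict (ball (0 : E n) 1)) :=
          lintegral_congr hpt
      _ = ENNReal.ofReal (∫ y in ball (0 : E n) 1, |⟪x, y⟫| ^ p) :=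
          (ofReal_integral_eq_lintegral_ofReal hint
            (Filter.Eventually.of_forall fun y => by positivity)).symm
      _ = ENNReal.ofReal (c * ‖x‖ ^ p) := by
          rw [int_ball_eq hp he x, ← hcdef, mul_comm]
  have hGnn : 0 ≤ᵐ[ν] fun θ : sphere (0 : E n) 1 => |⟪x, (θ : E n)⟫| ^ p :=
    Filter.Eventually.of_forall fun θ => by positivity
  rw [integral_eq_lintegral_of_nonneg_ae hGnn hGcont.aestronglyMeasurable]
  rw [hνdef, lintegral_smul_measure, hl0, hadef]
  have htr : ((ENNReal.ofReal (R ^ p * c))⁻¹ * ENNReal.ofReal (c * ‖x‖ ^ p)).toReal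
      = (R ^ p * c)⁻¹ * (c * ‖x‖ ^ p) := by
    rw [ENNReal.toReal_mul, ENNReal.toReal_inv, ENNReal.toReal_ofReal hRpc.le,
      ENNReal.toReal_ofReal (by positivity)]
  rw [smul_eq_mul, htr]
  have hgD : gauge D x = ‖x‖ / R := by rw [hDdef]; exact gauge_closedBall hR.le x
  rw [hgD, Real.div_rpow (norm_nonneg x) hR.le]
  have hRp : (0:ℝ) < R ^ p := by positivity
  field_simp

end MomentAux

/-- Corollary to Theorem 2: comparison of volume with a measure via moments. -/
theorem moment_comparison_volume {n : ℕ} (hn : 0 < n) (p : ℝ) (hp : 0 < p)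
    (K M : Set (E n)) (hK : IsSymmetricConvexBody K) (hM : IsSymmetricConvexBody M)
    (f : E n → ℝ) (hf : Continuous f) (hf0 : ∀ x, 0 ≤ f x)
    (hcomp : ∀ ξ : E n, ‖ξ‖ = 1 →
      (∫ x in K, |⟪x, ξ⟫| ^ p) ≤ ∫ x in M, |⟪x, ξ⟫| ^ p * f x) :
    (volume K).toReal ^ (((n : ℝ) + p) / n) ≤
      (((n : ℝ) + p) / n) * dovrLp n p M ^ p * (volume M).toReal ^ (p / (n : ℝ)) *
        ∫ x in M, f x := by
  classical
  set S : Set ℝ := {r | ∃ D : Set (E n), M ⊆ D ∧ IsLpBall n p D ∧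
    r = ((volume D).toReal / (volume M).toReal) ^ ((1 : ℝ) / n)} with hS
  have hMpos : (0 : ℝ) < (volume M).toReal :=
    ENNReal.toReal_pos (MomentAux.scb_vol_pos hM).ne' (MomentAux.scb_vol_lt_top hM).ne
  have hfint : (0 : ℝ) ≤ ∫ x in M, f x :=
    integral_nonneg fun x => hf0 x
  -- Key bound for each r ∈ S
  have key : ∀ r ∈ S, (volume K).toReal ^ (((n : ℝ) + p) / n) ≤
      (((n : ℝ) + p) / n) * r ^ p * (volume M).toReal ^ (p / (n : ℝ)) * ∫ x in M, f x := by
    rintro r ⟨D, hMD, hLp, rfl⟩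
    have hDpos : (0 : ℝ) < (volume D).toReal :=
      ENNReal.toReal_pos (MomentAux.scb_vol_pos hLp.1).ne' (MomentAux.scb_vol_lt_top hLp.1).ne
    have h1 := MomentAux.perD hn hp hK hM hMD hLp hf hf0 hcomp
    have hr : (((volume D).toReal / (volume M).toReal) ^ ((1 : ℝ) / n)) ^ p
        = ((volume D).toReal / (volume M).toReal) ^ (p / (n : ℝ)) := by
      rw [← Real.rpow_mul (by positivity), div_mul_eq_mul_div, one_mul]
    rw [hr, Real.div_rpow (by positivity) hMpos.le]
    calc (volume K).toReal ^ (((n : ℝ) + p) / n)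
        ≤ (((n : ℝ) + p) / n) * (volume D).toReal ^ (p / (n : ℝ)) * ∫ x in M, f x := h1
      _ = ((n : ℝ) + p) / ↑n * ((volume D).toReal ^ (p / ↑n) / (volume M).toReal ^ (p / ↑n)) *
            (volume M).toReal ^ (p / ↑n) * ∫ x in M, f x := by
          have : (volume M).toReal ^ (p / (n:ℝ)) ≠ 0 := by positivity
          field_simp
  have hne : S.Nonempty := by
    obtain ⟨D, hMD, hLp⟩ := MomentAux.exists_LpBall_superset hn hp hM
    exact ⟨_, D, hMD, hLp, rfl⟩
  have hbdd : BddBelow S := ⟨0, by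
    rintro r ⟨D, hMD, hLp, rfl⟩
    positivity⟩
  have hsinf : 0 ≤ sInf S := le_csInf hne (by rintro r ⟨D, hMD, hLp, rfl⟩; positivity)
  have hS0 : ∀ r ∈ S, (0 : ℝ) ≤ r := by rintro r ⟨D, hMD, hLp, rfl⟩; positivity
  have hdovr : dovrLp n p M = sInf S := rfl
  rw [hdovr]
  have hc : ContinuousAt
      (fun s : ℝ => (((n : ℝ) + p) / n) * s ^ p * (volume M).toReal ^ (p / (n : ℝ)) *
        ∫ x in M, f x) (sInf S) := by
    have h1 : ContinuousAt (fun s : ℝ => s ^ p) (sInf S) :=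
      Real.continuousAt_rpow_const _ _ (Or.inr hp.le)
    exact ((continuousAt_const.mul h1).mul continuousAt_const).mul continuousAt_const
  have hten : Filter.Tendsto
      (fun s : ℝ => (((n : ℝ) + p) / n) * s ^ p * (volume M).toReal ^ (p / (n : ℝ)) *
        ∫ x in M, f x) (𝓝[>] (sInf S))
      (𝓝 ((((n : ℝ) + p) / n) * (sInf S) ^ p * (volume M).toReal ^ (p / (n : ℝ)) *
        ∫ x in M, f x)) :=
    hc.continuousWithinAt
  refine ge_of_tendsto hten ?_
  filter_upwards [self_mem_nhdsWithin] with s hs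
  obtain ⟨r, hrS, hrs⟩ := (csInf_lt_iff hbdd hne).1 hs
  refine (key r hrS).trans ?_
  have hrp : r ^ p ≤ s ^ p := Real.rpow_le_rpow (hS0 r hrS) hrs.le hp.le
  have hn0 : (0 : ℝ) < ((n : ℝ) + p) / n := by positivity
  gcongr

end
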